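/- Let R be an integral domain with field of fractions F, and let M be a finitely generated module over the Laurent polynomial ring R[t,t⁻¹]. Then M is a torsion R[t,t⁻¹]-module if and only if F ⊗_R M is a torsion F[t,t⁻¹]-module. -/

import Mathlib

open LaurentPolynomial

set_option maxHeartbeats 1000000 in
set_option synthInstance.maxHeartbeats 1000000 in
/-- Let `R` be an integral domain with field of fractions `F`, and `M` a finitely
generated module over the Laurent polynomial ring `R[t,t⁻¹]`.  Then `M` is a torsion
`R[t,t⁻¹]`-module iff the base change `F[t,t⁻¹] ⊗ M` (which is `F ⊗_R M`) is a torsion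
`F[t,t⁻¹]`-module. -/
theorem stmt0 (R : Type*) [CommRing R] [IsDomain R]
    [Algebra (LaurentPolynomial R) (LaurentPolynomial (FractionRing R))]
    (hC : ∀ r : R, algebraMap (LaurentPolynomial R) (LaurentPolynomial (FractionRing R))
        (LaurentPolynomial.C r) = LaurentPolynomial.C (algebraMap R (FractionRing R) r))
    (hT : ∀ n : ℤ, algebraMap (LaurentPolynomial R) (LaurentPolynomial (FractionRing R))
        (LaurentPolynomial.T n) = LaurentPolynomial.T n)
    (M : Type*) [AddCommGroup M] [Module (LaurentPolynomial R) M]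
    [Module.Finite (LaurentPolynomial R) M] :
    Module.IsTorsion (LaurentPolynomial R) M ↔
      Module.IsTorsion (LaurentPolynomial (FractionRing R))
        (TensorProduct (LaurentPolynomial R) (LaurentPolynomial (FractionRing R)) M) := by
  classical
  let φ := algebraMap (LaurentPolynomial R) (LaurentPolynomial (FractionRing R))
  -- coefficient formula for φ
  have hcoeff : ∀ a : LaurentPolynomial R, ∀ n : ℤ,
      (φ a).coeff n = algebraMap R (FractionRing R) (a.coeff n) := by
    intro a
    induction a using LaurentPolynomial.induction_on' with
    | add p q hp hq =>
        intro n
        rw [map_add, AddMonoidAlgebra.coeff_add, Finsupp.add_apply, hp n, hq n, ← map_add,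
          ← Finsupp.add_apply, ← AddMonoidAlgebra.coeff_add]
    | C_mul_T n r =>
        intro m
        rw [map_mul, hC, hT, ← LaurentPolynomial.single_eq_C_mul_T,
          ← LaurentPolynomial.single_eq_C_mul_T, AddMonoidAlgebra.coeff_single,
          AddMonoidAlgebra.coeff_single, Finsupp.single_apply, Finsupp.single_apply,
          apply_ite (algebraMap R (FractionRing R)), map_zero]
  have hinj : Function.Injective φ := by
    intro a b h
    refine LaurentPolynomial.ext fun n => ?_
    have h2 := congrArg (fun p : LaurentPolynomial (FractionRing R) => p.coeff n) h
    simp only [hcoeff] at h2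
    exact IsFractionRing.injective R (FractionRing R) h2
  -- clearing denominators
  have hclear : ∀ q : LaurentPolynomial (FractionRing R), ∃ (r : R) (a : LaurentPolynomial R),
      r ≠ 0 ∧ LaurentPolynomial.C (algebraMap R (FractionRing R) r) * q = φ a := by
    intro q
    induction q using LaurentPolynomial.induction_on' with
    | add p q hp hq =>
        obtain ⟨r1, a1, hr1, e1⟩ := hp
        obtain ⟨r2, a2, hr2, e2⟩ := hq
        refine ⟨r1 * r2, LaurentPolynomial.C r2 * a1 + LaurentPolynomial.C r1 * a2,
          mul_ne_zero hr1 hr2, ?_⟩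
        rw [map_add, map_mul φ, map_mul φ, hC, hC, ← e1, ← e2,
          map_mul (algebraMap R (FractionRing R)), map_mul LaurentPolynomial.C]
        ring
    | C_mul_T n x =>
        obtain ⟨⟨y, s⟩, hys⟩ := IsLocalization.surj (nonZeroDivisors R) x
        refine ⟨(s : R), LaurentPolynomial.C y * LaurentPolynomial.T n,
          nonZeroDivisors.ne_zero s.2, ?_⟩
        rw [map_mul φ, hC, hT, ← mul_assoc, ← map_mul LaurentPolynomial.C,
          mul_comm (algebraMap R (FractionRing R) s) x, hys]
  have hFR : Function.Injective (algebraMap R (FractionRing R)) :=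
    IsFractionRing.injective R (FractionRing R)
  have hCinj : ∀ x : R, x ≠ 0 → (LaurentPolynomial.C x : LaurentPolynomial R) ≠ 0 :=
    fun x hx => by
    rw [← LaurentPolynomial.single_eq_C, Ne, AddMonoidAlgebra.single_eq_zero]
    exact hx
  have hCFne : ∀ x : FractionRing R, x ≠ 0 →
      (LaurentPolynomial.C x : LaurentPolynomial (FractionRing R)) ≠ 0 := fun x hx => by
    rw [← LaurentPolynomial.single_eq_C, Ne, AddMonoidAlgebra.single_eq_zero]
    exact hx
  -- the submonoid of constants coming from nonzero elements of R
  haveI hloc : IsLocalization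
      ((nonZeroDivisors R).map (LaurentPolynomial.C : R →+* LaurentPolynomial R))
      (LaurentPolynomial (FractionRing R)) := by
    constructor
    constructor
    · rintro ⟨_, r, hr, rfl⟩
      rw [hC]
      exact (isUnit_iff_ne_zero.2 fun h =>
        nonZeroDivisors.ne_zero hr (hFR (by simpa using h))).map
        (LaurentPolynomial.C : (FractionRing R) →+* LaurentPolynomial (FractionRing R))
    · intro q
      obtain ⟨r, a, hr, e⟩ := hclear q
      refine ⟨⟨a, ⟨LaurentPolynomial.C r, ⟨r, mem_nonZeroDivisors_of_ne_zero hr, rfl⟩⟩⟩, ?_⟩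
      simpa [hC, mul_comm] using e
    · intro x y h
      exact ⟨1, by rw [hinj h]⟩
  haveI : IsLocalizedModule
      ((nonZeroDivisors R).map (LaurentPolynomial.C : R →+* LaurentPolynomial R))
      (TensorProduct.mk (LaurentPolynomial R) (LaurentPolynomial (FractionRing R)) M 1) :=
    (isLocalizedModule_iff_isBaseChange _ (LaurentPolynomial (FractionRing R)) _).mpr
      (TensorProduct.isBaseChange (LaurentPolynomial R) M (LaurentPolynomial (FractionRing R)))
  constructor
  · -- forward
    intro hM z
    obtain ⟨s, hs⟩ := Module.Finite.fg_top (R := LaurentPolynomial R) (M := M)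
    have hMm : ∀ m : M, ∃ a : nonZeroDivisors (LaurentPolynomial R), a • m = 0 := fun m => @hM m
    choose f hf using hMm
    have ha0 : (∏ m ∈ s, (f m : LaurentPolynomial R)) ≠ 0 :=
      Finset.prod_ne_zero_iff.2 fun m _ => nonZeroDivisors.ne_zero (f m).2
    have hasmul : ∀ m ∈ s, (∏ m ∈ s, (f m : LaurentPolynomial R)) • m = 0 := by
      intro m hm
      rw [← Finset.prod_erase_mul s _ hm, mul_smul, ← Submonoid.smul_def, hf m, smul_zero]
    have hann : ∀ x : M, (∏ m ∈ s, (f m : LaurentPolynomial R)) • x = 0 := by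
      intro x
      have hx : x ∈ (⊤ : Submodule (LaurentPolynomial R) M) := trivial
      rw [← hs] at hx
      refine Submodule.span_induction (fun m hm => hasmul m hm) (smul_zero _) ?_ ?_ hx
      · intro u v _ _ hu hv; rw [smul_add, hu, hv, add_zero]
      · intro c u _ hu; rw [smul_comm, hu, smul_zero]
    refine ⟨⟨φ (∏ m ∈ s, (f m : LaurentPolynomial R)),
      mem_nonZeroDivisors_of_ne_zero fun h => ha0 (hinj (by simpa using h))⟩, ?_⟩
    rw [Submonoid.smul_def]
    show φ (∏ m ∈ s, (f m : LaurentPolynomial R)) • z = 0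
    induction z using TensorProduct.induction_on with
    | zero => exact smul_zero _
    | tmul p m =>
        rw [TensorProduct.smul_tmul', smul_eq_mul,
          show φ (∏ m ∈ s, (f m : LaurentPolynomial R)) * p
              = (∏ m ∈ s, (f m : LaurentPolynomial R)) • p from (Algebra.smul_def _ p).symm,
          TensorProduct.smul_tmul, hann m, TensorProduct.tmul_zero]
    | add u v hu hv => rw [smul_add, hu, hv, add_zero]
  · -- converse
    intro hT' m
    obtain ⟨q, hq⟩ := @hT' ((1 : LaurentPolynomial (FractionRing R)) ⊗ₜ[LaurentPolynomial R] m)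
    obtain ⟨r, a, hr, e⟩ := hclear (q : LaurentPolynomial (FractionRing R))
    have hq0 : (q : LaurentPolynomial (FractionRing R)) ≠ 0 := nonZeroDivisors.ne_zero q.2
    have ha0 : a ≠ 0 := by
      intro h
      rw [h, map_zero] at e
      exact (mul_ne_zero (hCFne _ fun h' => hr (hFR (by simpa using h'))) hq0) e
    have h1 : TensorProduct.mk (LaurentPolynomial R) (LaurentPolynomial (FractionRing R)) M 1
        (a • m) = 0 := by
      rw [map_smul, TensorProduct.mk_apply, ← algebraMap_smul (LaurentPolynomial (FractionRing R))
        a ((1 : LaurentPolynomial (FractionRing R)) ⊗ₜ[LaurentPolynomial R] m), ← e, mul_smul,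
        show (q : LaurentPolynomial (FractionRing R)) •
          ((1 : LaurentPolynomial (FractionRing R)) ⊗ₜ[LaurentPolynomial R] m) = 0 from hq,
        smul_zero]
    obtain ⟨⟨_, u, hu, rfl⟩, hsu⟩ := (IsLocalizedModule.eq_zero_iff
      ((nonZeroDivisors R).map (LaurentPolynomial.C : R →+* LaurentPolynomial R)) _).1 h1
    refine ⟨⟨LaurentPolynomial.C u * a, mem_nonZeroDivisors_of_ne_zero
      (mul_ne_zero (hCinj u (nonZeroDivisors.ne_zero hu)) ha0)⟩, ?_⟩
    rw [Submonoid.smul_def, mul_smul]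
    exact hsu
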